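/- arXiv:1403.7820 — 2 statements merged into one kernel-verified Lean document; each statement's English description precedes it below -/
import Mathlib

section
/- For the quadratic form T(β) = Σ_{i=1}^{n} β_i² − Σ_{i=1}^{n-1} β_i β_{i+1} + β_1 β_n on ℤⁿ (n ≥ 3), the set of positive roots of T equals the set of positive roots of the Aₙ root system {α_i + α_{i+1} + ⋯ + α_j : 1 ≤ i ≤ j ≤ n} with the single root α_1 + α_2 + ⋯ + α_n removed. -/
lemma const_seg (m : ℕ) (β : Fin (m+1) → ℤ) (p q : ℕ) (hp : p ≤ q) (hq : q ≤ m)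
    (hd : ∀ k : Fin m, p ≤ k.val → k.val < q → β k.succ = β k.castSucc) :
    β ⟨p, by omega⟩ = β ⟨q, by omega⟩ := by
  induction q, hp using Nat.le_induction with
  | base => rfl
  | succ q hq' ih =>
    have h1 : β ⟨p, by omega⟩ = β ⟨q, by omega⟩ :=
      ih (by omega) (fun k hk1 hk2 => hd k hk1 (by omega))
    have h2 : β (Fin.succ ⟨q, by omega⟩) = β (Fin.castSucc ⟨q, by omega⟩) :=
      hd ⟨q, by omega⟩ (by simpa using hq') (by simp)
    have e1 : Fin.succ (⟨q, by omega⟩ : Fin m) = ⟨q+1, by omega⟩ := rfl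
    have e2 : Fin.castSucc (⟨q, by omega⟩ : Fin m) = ⟨q, by omega⟩ := rfl
    rw [h1, ← e2, ← h2, e1]

lemma key_id (m : ℕ) (β : Fin (m+1) → ℤ) :
    2 * (∑ k, (β k) ^ 2 - ∑ k : Fin m, β k.castSucc * β k.succ + β 0 * β (Fin.last m))
      = (β 0 + β (Fin.last m))^2 + ∑ k : Fin m, (β k.succ - β k.castSucc)^2 := by
  have h1 : ∑ k : Fin (m+1), (β k)^2 = (β 0)^2 + ∑ k : Fin m, (β k.succ)^2 :=
    Fin.sum_univ_succ _
  have h2 : ∑ k : Fin (m+1), (β k)^2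
      = (∑ k : Fin m, (β k.castSucc)^2) + (β (Fin.last m))^2 :=
    Fin.sum_univ_castSucc _
  have h3 : ∑ k : Fin m, (β k.succ - β k.castSucc)^2
      = ∑ k : Fin m, (β k.succ)^2 + ∑ k : Fin m, (β k.castSucc)^2
        - 2 * ∑ k : Fin m, β k.castSucc * β k.succ := by
    rw [← Finset.sum_add_distrib, Finset.mul_sum, ← Finset.sum_sub_distrib]
    exact Finset.sum_congr rfl fun k _ => by ring
  linear_combination h1 + h2 - h3

-- value at a mk index equals value at the Fin itself
lemma val_seg_left (m : ℕ) (β : Fin (m+1) → ℤ) (k : Fin (m+1)) (q : ℕ)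
    (hd : ∀ k' : Fin m, k'.val < k.val → β k'.succ = β k'.castSucc) :
    β k = β 0 := by
  have := const_seg m β 0 k.val (Nat.zero_le _) (by omega) (fun k' _ h2 => hd k' h2)
  rw [Fin.eta] at this
  rw [← this]; rfl

lemma val_seg_right (m : ℕ) (β : Fin (m+1) → ℤ) (k : Fin (m+1))
    (hd : ∀ k' : Fin m, k.val ≤ k'.val → β k'.succ = β k'.castSucc) :
    β k = β (Fin.last m) := by
  have := const_seg m β k.val m (by omega) le_rfl (fun k' h1 _ => hd k' h1)
  rw [Fin.eta] at this
  rw [this]; rfl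

lemma val_seg_mid (m : ℕ) (β : Fin (m+1) → ℤ) (k1 : Fin m) (k : Fin (m+1))
    (hk : k1.val + 1 ≤ k.val)
    (hd : ∀ k' : Fin m, k1.val + 1 ≤ k'.val → k'.val < k.val → β k'.succ = β k'.castSucc) :
    β k = β k1.succ := by
  have := const_seg m β (k1.val+1) k.val hk (by omega) hd
  rw [Fin.eta] at this
  rw [← this]; rfl

lemma diff_sq (m : ℕ) (i j : Fin (m+1)) (hij : i.val ≤ j.val) (k : Fin m) :
    ((if i ≤ k.succ ∧ k.succ ≤ j then (1:ℤ) else 0)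
      - (if i ≤ k.castSucc ∧ k.castSucc ≤ j then 1 else 0))^2
      = if (k.val + 1 = i.val ∨ k.val = j.val) then 1 else 0 := by
  simp only [Fin.le_def, Fin.val_succ, Fin.coe_castSucc]
  split_ifs <;> try norm_num
  all_goals omega

/-- For `T(β) = Σ_{i=1}^{n} β_i² − Σ_{i=1}^{n-1} β_i β_{i+1} + β_1 β_n` on `ℤⁿ`
(here `n = m + 1` with `m ≥ 2`, so `n ≥ 3`), the positive roots of `T` are exactly the
`Aₙ`-positive roots (indicator vectors of contiguous intervals `[i,j]`) except the full
root `α_1 + ⋯ + α_n`. -/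
theorem positive_roots_An_bound (m : ℕ) (hm : 2 ≤ m) :
    ∀ β : Fin (m + 1) → ℤ, (∀ k, 0 ≤ β k) →
      ((∑ k, (β k) ^ 2 - ∑ k : Fin m, β k.castSucc * β k.succ
          + β 0 * β (Fin.last m) = 1) ↔
        ∃ i j : Fin (m + 1), i ≤ j ∧ ¬(i = 0 ∧ j = Fin.last m) ∧
          β = fun k => if i ≤ k ∧ k ≤ j then (1 : ℤ) else 0) := by
  intro β hβ
  constructor
  · intro h
    have hkey : (β 0 + β (Fin.last m))^2
        + ∑ k : Fin m, (β k.succ - β k.castSucc)^2 = 2 := by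
      have hk := key_id m β
      rw [h] at hk; linarith
    have hsum_nonneg : (0:ℤ) ≤ ∑ k : Fin m, (β k.succ - β k.castSucc)^2 :=
      Finset.sum_nonneg (fun k _ => sq_nonneg _)
    have ha : 0 ≤ β 0 := hβ 0
    have hb : 0 ≤ β (Fin.last m) := hβ (Fin.last m)
    have hDle : ∀ k : Fin m, -1 ≤ β k.succ - β k.castSucc ∧ β k.succ - β k.castSucc ≤ 1 := by
      intro k
      have h1 : (β k.succ - β k.castSucc)^2 ≤ ∑ k : Fin m, (β k.succ - β k.castSucc)^2 :=
        Finset.single_le_sum (f := fun k : Fin m => (β k.succ - β k.castSucc)^2)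
          (fun i _ => sq_nonneg _) (Finset.mem_univ k)
      constructor <;> nlinarith [sq_nonneg (β 0 + β (Fin.last m))]
    have hsq1 : ∀ k : Fin m, β k.succ ≠ β k.castSucc → (β k.succ - β k.castSucc)^2 = 1 := by
      intro k hk
      have h1 := (hDle k).1; have h2 := (hDle k).2
      have h3 : β k.succ - β k.castSucc ≠ 0 := sub_ne_zero.mpr hk
      have : β k.succ - β k.castSucc = 1 ∨ β k.succ - β k.castSucc = -1 := by omega
      rcases this with h | h <;> rw [h] <;> norm_num
    have hab : β 0 + β (Fin.last m) ≤ 1 := by nlinarith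
    -- helper for building equality of functions
    have hmk : ∀ i j : Fin (m+1),
        (∀ k : Fin (m+1), (i.val ≤ k.val ∧ k.val ≤ j.val) → β k = 1) →
        (∀ k : Fin (m+1), ¬(i.val ≤ k.val ∧ k.val ≤ j.val) → β k = 0) →
        β = fun k => if i ≤ k ∧ k ≤ j then (1:ℤ) else 0 := by
      intro i j h1 h0
      funext k
      by_cases hc : i ≤ k ∧ k ≤ j
      · rw [if_pos hc]; exact h1 k ⟨hc.1, hc.2⟩
      · rw [if_neg hc]
        apply h0 k
        intro hc'
        exact hc ⟨hc'.1, hc'.2⟩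
    rcases (by omega : β 0 + β (Fin.last m) = 0 ∨ β 0 + β (Fin.last m) = 1) with hc0 | hc1
    · -- a = b = 0, two jumps
      have ha0 : β 0 = 0 := by omega
      have hb0 : β (Fin.last m) = 0 := by omega
      have hsum2 : ∑ k : Fin m, (β k.succ - β k.castSucc)^2 = 2 := by
        rw [hc0] at hkey; norm_num at hkey; linarith
      have hex1 : ∃ k1 : Fin m, β k1.succ ≠ β k1.castSucc := by
        by_contra hc; push_neg at hc
        have : ∑ k : Fin m, (β k.succ - β k.castSucc)^2 = 0 :=
          Finset.sum_eq_zero (fun k _ => by rw [hc k]; ring)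
        omega
      obtain ⟨k1, hk1⟩ := hex1
      have hs1 : (β k1.succ - β k1.castSucc)^2 = 1 := hsq1 k1 hk1
      have herase1 : ∑ k ∈ Finset.univ.erase k1, (β k.succ - β k.castSucc)^2 = 1 := by
        have := Finset.add_sum_erase Finset.univ
          (fun k : Fin m => (β k.succ - β k.castSucc)^2) (Finset.mem_univ k1)
        omega
      have hex2 : ∃ k2 ∈ Finset.univ.erase k1, β k2.succ ≠ β k2.castSucc := by
        by_contra hc; push_neg at hc
        have : ∑ k ∈ Finset.univ.erase k1, (β k.succ - β k.castSucc)^2 = 0 :=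
          Finset.sum_eq_zero (fun k hk => by rw [hc k hk]; ring)
        omega
      obtain ⟨k2, hk2mem, hk2⟩ := hex2
      have hk12 : k2 ≠ k1 := (Finset.mem_erase.mp hk2mem).1
      have hs2 : (β k2.succ - β k2.castSucc)^2 = 1 := hsq1 k2 hk2
      have herase2 : ∑ k ∈ (Finset.univ.erase k1).erase k2,
          (β k.succ - β k.castSucc)^2 = 0 := by
        have := Finset.add_sum_erase (Finset.univ.erase k1)
          (fun k : Fin m => (β k.succ - β k.castSucc)^2) hk2mem
        omega
      have hrest : ∀ k : Fin m, k ≠ k1 → k ≠ k2 → β k.succ = β k.castSucc := by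
        intro k h1 h2
        have hz := (Finset.sum_eq_zero_iff_of_nonneg
          (fun k _ => sq_nonneg ((β k.succ - β k.castSucc)))).mp herase2 k
          (by simp [h1, h2])
        have := sq_eq_zero_iff.mp hz
        linarith
      -- wlog smaller/larger
      have main2 : ∀ kl kr : Fin m, kl.val < kr.val →
          β kl.succ ≠ β kl.castSucc →
          (∀ k : Fin m, k ≠ kl → k ≠ kr → β k.succ = β k.castSucc) →
          ∃ i j : Fin (m + 1), i ≤ j ∧ ¬(i = 0 ∧ j = Fin.last m) ∧
            β = fun k => if i ≤ k ∧ k ≤ j then (1 : ℤ) else 0 := by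
        intro kl kr hlt hne hr
        have hleft : ∀ k : Fin (m+1), k.val ≤ kl.val → β k = 0 := by
          intro k hk
          rw [val_seg_left m β k 0 (fun k' hk' => hr k'
            (by intro hc; rw [hc] at hk'; omega)
            (by intro hc; rw [hc] at hk'; omega))]
          exact ha0
        have hright : ∀ k : Fin (m+1), kr.val + 1 ≤ k.val → β k = 0 := by
          intro k hk
          rw [val_seg_right m β k (fun k' hk' => hr k'
            (by intro hc; rw [hc] at hk'; omega)
            (by intro hc; rw [hc] at hk'; omega))]
          exact hb0
        have hmid : ∀ k : Fin (m+1), kl.val + 1 ≤ k.val → k.val ≤ kr.val → β k = β kl.succ := by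
          intro k hk1 hk2
          exact val_seg_mid m β kl k hk1 (fun k' h1 h2 => hr k'
            (by intro hc; rw [hc] at h1; omega)
            (by intro hc; rw [hc] at h2; omega))
        have hv : β kl.succ = 1 := by
          have h0' : β kl.castSucc = 0 := hleft kl.castSucc (by simp)
          have hd1 := (hDle kl).1; have hd2 := (hDle kl).2
          have hne' : β kl.succ ≠ 0 := h0' ▸ hne
          have hpos : 0 ≤ β kl.succ := hβ _
          omega
        refine ⟨kl.succ, kr.castSucc, ?_, ?_, ?_⟩
        · simp only [Fin.le_def, Fin.val_succ, Fin.coe_castSucc]; omega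
        · rintro ⟨hc, -⟩
          exact (Fin.succ_ne_zero kl) hc
        · apply hmk
          · intro k hk
            simp only [Fin.val_succ, Fin.coe_castSucc] at hk
            rw [hmid k hk.1 hk.2]; exact hv
          · intro k hk
            simp only [Fin.val_succ, Fin.coe_castSucc] at hk
            rcases (by omega : k.val ≤ kl.val ∨ kr.val + 1 ≤ k.val) with h' | h'
            · exact hleft k h'
            · exact hright k h'
      rcases lt_trichotomy k1.val k2.val with hlt | heq | hlt
      · exact main2 k1 k2 hlt hk1 (fun k a b => hrest k a b)
      · exact absurd (Fin.ext heq) (Ne.symm hk12)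
      · exact main2 k2 k1 hlt hk2 (fun k a b => hrest k b a)
    · -- a + b = 1 : one jump
      have hsum1 : ∑ k : Fin m, (β k.succ - β k.castSucc)^2 = 1 := by
        rw [hc1] at hkey; norm_num at hkey; linarith
      have hex1 : ∃ k0 : Fin m, β k0.succ ≠ β k0.castSucc := by
        by_contra hc; push_neg at hc
        have : ∑ k : Fin m, (β k.succ - β k.castSucc)^2 = 0 :=
          Finset.sum_eq_zero (fun k _ => by rw [hc k]; ring)
        omega
      obtain ⟨k0, hk0⟩ := hex1
      have hs0 : (β k0.succ - β k0.castSucc)^2 = 1 := hsq1 k0 hk0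
      have herase : ∑ k ∈ Finset.univ.erase k0, (β k.succ - β k.castSucc)^2 = 0 := by
        have := Finset.add_sum_erase Finset.univ
          (fun k : Fin m => (β k.succ - β k.castSucc)^2) (Finset.mem_univ k0)
        omega
      have hrest : ∀ k : Fin m, k ≠ k0 → β k.succ = β k.castSucc := by
        intro k h1
        have hz := (Finset.sum_eq_zero_iff_of_nonneg
          (fun k _ => sq_nonneg ((β k.succ - β k.castSucc)))).mp herase k (by simp [h1])
        have := sq_eq_zero_iff.mp hz
        linarith
      have hleft : ∀ k : Fin (m+1), k.val ≤ k0.val → β k = β 0 := by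
        intro k hk
        exact val_seg_left m β k 0 (fun k' hk' => hrest k'
          (by intro hc; rw [hc] at hk'; omega))
      have hright : ∀ k : Fin (m+1), k0.val + 1 ≤ k.val → β k = β (Fin.last m) := by
        intro k hk
        exact val_seg_right m β k (fun k' hk' => hrest k'
          (by intro hc; rw [hc] at hk'; omega))
      rcases (by omega : (β 0 = 1 ∧ β (Fin.last m) = 0) ∨ (β 0 = 0 ∧ β (Fin.last m) = 1))
        with ⟨ha1, hb1⟩ | ⟨ha1, hb1⟩
      · refine ⟨0, k0.castSucc, ?_, ?_, ?_⟩
        · exact Fin.zero_le _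
        · rintro ⟨-, hc⟩
          have := congrArg Fin.val hc
          simp only [Fin.coe_castSucc, Fin.val_last] at this
          omega
        · apply hmk
          · intro k hk
            simp only [Fin.coe_castSucc, Fin.val_zero] at hk
            rw [hleft k hk.2]; exact ha1
          · intro k hk
            simp only [Fin.coe_castSucc, Fin.val_zero] at hk
            rw [hright k (by omega)]; exact hb1
      · refine ⟨k0.succ, Fin.last m, ?_, ?_, ?_⟩
        · exact Fin.le_last _
        · rintro ⟨hc, -⟩
          exact (Fin.succ_ne_zero k0) hc
        · apply hmk
          · intro k hk
            simp only [Fin.val_succ, Fin.val_last] at hk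
            rw [hright k hk.1]; exact hb1
          · intro k hk
            simp only [Fin.val_succ, Fin.val_last] at hk
            rw [hleft k (by omega)]; exact ha1
  · rintro ⟨i, j, hij, hfull, rfl⟩
    have hij' : i.val ≤ j.val := hij
    have hk := key_id m (fun k => if i ≤ k ∧ k ≤ j then (1:ℤ) else 0)
    beta_reduce
    beta_reduce at hk
    have hjle : j.val ≤ m := by omega
    suffices hS : ((if i ≤ 0 ∧ 0 ≤ j then (1:ℤ) else 0) + (if i ≤ Fin.last m ∧ Fin.last m ≤ j then 1 else 0))^2
        + ∑ k : Fin m, ((if i ≤ k.succ ∧ k.succ ≤ j then (1:ℤ) else 0)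
            - (if i ≤ k.castSucc ∧ k.castSucc ≤ j then 1 else 0))^2 = 2 by
      linarith
    have hsum : ∑ k : Fin m, ((if i ≤ k.succ ∧ k.succ ≤ j then (1:ℤ) else 0)
        - (if i ≤ k.castSucc ∧ k.castSucc ≤ j then 1 else 0))^2
        = ∑ k : Fin m, (if (k.val + 1 = i.val ∨ k.val = j.val) then (1:ℤ) else 0) :=
      Finset.sum_congr rfl (fun k _ => diff_sq m i j hij' k)
    rw [hsum]
    by_cases hi : i.val = 0 <;> by_cases hj : j.val = m
    · exact absurd ⟨Fin.ext hi, Fin.ext (by simpa using hj)⟩ hfull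
    · -- i = 0, j < last
      have h0 : (if i ≤ 0 ∧ 0 ≤ j then (1:ℤ) else 0) = 1 :=
        if_pos ⟨Fin.le_zero_iff.mpr (Fin.ext (by simp [hi])), Fin.zero_le _⟩
      have hl : (if i ≤ Fin.last m ∧ Fin.last m ≤ j then (1:ℤ) else 0) = 0 :=
        if_neg (by rintro ⟨-, hc⟩; rw [Fin.le_def] at hc; simp at hc; omega)
      have hjm : j.val < m := by omega
      have hsum2 : ∑ k : Fin m, (if (k.val + 1 = i.val ∨ k.val = j.val) then (1:ℤ) else 0) = 1 := by
        rw [Finset.sum_eq_single_of_mem (⟨j.val, hjm⟩ : Fin m) (Finset.mem_univ _)]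
        · exact if_pos (Or.inr rfl)
        · intro k _ hk
          refine if_neg ?_
          have : k.val ≠ j.val := fun hc => hk (Fin.ext hc)
          omega
      rw [h0, hl, hsum2]; norm_num
    · -- i > 0, j = last
      have h0 : (if i ≤ 0 ∧ 0 ≤ j then (1:ℤ) else 0) = 0 :=
        if_neg (by rintro ⟨hc, -⟩; exact hi (by rw [Fin.le_zero_iff.mp hc]; simp))
      have hl : (if i ≤ Fin.last m ∧ Fin.last m ≤ j then (1:ℤ) else 0) = 1 :=
        if_pos ⟨Fin.le_last _, by rw [Fin.le_def]; simp; omega⟩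
      have him : i.val - 1 < m := by omega
      have hsum2 : ∑ k : Fin m, (if (k.val + 1 = i.val ∨ k.val = j.val) then (1:ℤ) else 0) = 1 := by
        rw [Finset.sum_eq_single_of_mem (⟨i.val - 1, him⟩ : Fin m) (Finset.mem_univ _)]
        · exact if_pos (Or.inl (by simp; omega))
        · intro k _ hk
          refine if_neg ?_
          have : k.val ≠ i.val - 1 := fun hc => hk (Fin.ext hc)
          have : k.val < m := k.isLt
          omega
      rw [h0, hl, hsum2]; norm_num
    · -- i > 0, j < last
      have h0 : (if i ≤ 0 ∧ 0 ≤ j then (1:ℤ) else 0) = 0 :=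
        if_neg (by rintro ⟨hc, -⟩; exact hi (by rw [Fin.le_zero_iff.mp hc]; simp))
      have hl : (if i ≤ Fin.last m ∧ Fin.last m ≤ j then (1:ℤ) else 0) = 0 :=
        if_neg (by rintro ⟨-, hc⟩; rw [Fin.le_def] at hc; simp at hc; omega)
      have him : i.val - 1 < m := by omega
      have hjm : j.val < m := by omega
      set k1 : Fin m := ⟨i.val - 1, him⟩ with hk1def
      set k2 : Fin m := ⟨j.val, hjm⟩ with hk2def
      have hne : k1 ≠ k2 := by
        intro hc
        have := congrArg Fin.val hc
        simp [hk1def, hk2def] at this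
        omega
      have hsum2 : ∑ k : Fin m, (if (k.val + 1 = i.val ∨ k.val = j.val) then (1:ℤ) else 0) = 2 := by
        rw [← Finset.sum_subset (Finset.subset_univ ({k1, k2} : Finset (Fin m)))
          (fun k _ hk => ?_), Finset.sum_pair hne]
        · have e1 : (if (k1.val + 1 = i.val ∨ k1.val = j.val) then (1:ℤ) else 0) = 1 :=
            if_pos (Or.inl (by simp [hk1def]; omega))
          have e2 : (if (k2.val + 1 = i.val ∨ k2.val = j.val) then (1:ℤ) else 0) = 1 :=
            if_pos (Or.inr rfl)
          rw [e1, e2]; norm_num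
        · simp only [Finset.mem_insert, Finset.mem_singleton] at hk
          push_neg at hk
          refine if_neg ?_
          have h1 : k.val ≠ i.val - 1 := fun hc => hk.1 (Fin.ext hc)
          have h2 : k.val ≠ j.val := fun hc => hk.2 (Fin.ext hc)
          omega
      rw [h0, hl, hsum2]; norm_num
end

section
/- Let M, N, R be finite modules over a finite ring (or finite-dimensional representations over 𝔽_q), and define the Hall number F^R_{M,N} as the number of submodules X ⊆ R with X ≅ N and R/X ≅ M. Then F^R_{M,N} = (|Ext(M,N)_R| / |Hom(M,N)|) · (|Aut(R)| / (|Aut(M)|·|Aut(N)|)), where Ext(M,N)_R ⊆ Ext¹(M,N) is the set of extension classes whose middle term is isomorphic to R. (Riedtmann's formula.) -/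
section Riedtmann

variable (Λ : Type) [Ring Λ] (M N R : Type)
  [AddCommGroup M] [Module Λ M] [AddCommGroup N] [Module Λ N]
  [AddCommGroup R] [Module Λ R]

/-- Short exact sequences `0 → N → R → M → 0` of `Λ`-modules. -/
def SES : Type :=
  {p : (N →ₗ[Λ] R) × (R →ₗ[Λ] M) //
    Function.Injective p.1 ∧ Function.Surjective p.2 ∧
      LinearMap.range p.1 = LinearMap.ker p.2}

/-- Equivalence of extensions with middle term `R`: an isomorphism of the middle terms
commuting with the inclusions of `N` and the projections onto `M`.  The quotient
`Quot (ExtEquiv Λ M N R)` is the set `Ext(M,N)_R` of extension classes in `Ext¹(M,N)`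
whose middle term is isomorphic to `R`. -/
def ExtEquiv (p q : SES Λ M N R) : Prop :=
  ∃ φ : R ≃ₗ[Λ] R, (∀ n, φ (p.1.1 n) = q.1.1 n) ∧ (∀ r, q.1.2 (φ r) = p.1.2 r)

namespace RiedtmannAux

variable {Λ M N R}

/-- The action of `Aut R` on short exact sequences. -/
def smulSES (φ : R ≃ₗ[Λ] R) (s : SES Λ M N R) : SES Λ M N R :=
  ⟨(φ.toLinearMap ∘ₗ s.1.1, s.1.2 ∘ₗ φ.symm.toLinearMap),
    φ.injective.comp s.2.1, s.2.2.1.comp φ.symm.surjective, by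
      rw [LinearMap.range_comp, LinearMap.ker_comp, s.2.2.2,
        ← Submodule.map_equiv_eq_comap_symm]⟩

instance : MulAction (R ≃ₗ[Λ] R) (SES Λ M N R) where
  smul := smulSES
  one_smul s := Subtype.ext (Prod.ext (LinearMap.ext fun _ => rfl) (LinearMap.ext fun _ => rfl))
  mul_smul φ ψ s := Subtype.ext (Prod.ext (LinearMap.ext fun _ => rfl) (LinearMap.ext fun _ => rfl))

lemma smul_def (φ : R ≃ₗ[Λ] R) (s : SES Λ M N R) :
    φ • s = ⟨(φ.toLinearMap ∘ₗ s.1.1, s.1.2 ∘ₗ φ.symm.toLinearMap), (φ • s).2⟩ := rfl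

lemma extEquiv_iff_smul (p q : SES Λ M N R) :
    ExtEquiv Λ M N R p q ↔ ∃ φ : R ≃ₗ[Λ] R, φ • p = q := by
  constructor
  · rintro ⟨φ, h1, h2⟩
    refine ⟨φ, Subtype.ext (Prod.ext (LinearMap.ext fun n => h1 n)
      (LinearMap.ext fun r => ?_))⟩
    have := h2 (φ.symm r)
    exact (by simpa using this.symm : p.1.2 (φ.symm r) = q.1.2 r)
  · rintro ⟨φ, rfl⟩
    refine ⟨φ, fun n => rfl, fun r => ?_⟩
    show (p.1.2 ∘ₗ φ.symm.toLinearMap) (φ r) = _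
    simp

lemma extEquiv_iff_orbitRel (p q : SES Λ M N R) :
    ExtEquiv Λ M N R p q ↔ (MulAction.orbitRel (R ≃ₗ[Λ] R) (SES Λ M N R)).r p q := by
  rw [extEquiv_iff_smul]
  show _ ↔ p ∈ MulAction.orbit _ q
  constructor
  · rintro ⟨φ, rfl⟩
    exact ⟨φ⁻¹, by simp⟩
  · rintro ⟨φ, rfl⟩
    exact ⟨φ⁻¹, by simp⟩

/-- `Ext(M,N)_R` is the quotient of `SES` by the `Aut R`-action. -/
noncomputable def quotEquivOrbitQuot :
    Quot (ExtEquiv Λ M N R) ≃ Quotient (MulAction.orbitRel (R ≃ₗ[Λ] R) (SES Λ M N R)) :=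
  Quot.congr (Equiv.refl _) (fun a b => extEquiv_iff_orbitRel a b)

section stab

variable (s : SES Λ M N R)

lemma pi_eq_zero : s.1.2 ∘ₗ s.1.1 = 0 := by
  ext n
  have : s.1.1 n ∈ LinearMap.ker s.1.2 := s.2.2.2 ▸ LinearMap.mem_range_self _ n
  simpa using this

/-- For `h : M →ₗ N`, the automorphism `1 + i∘h∘p` of `R`. -/
def unitOf (h : M →ₗ[Λ] N) : R ≃ₗ[Λ] R :=
  LinearEquiv.ofLinear (LinearMap.id + s.1.1 ∘ₗ h ∘ₗ s.1.2)
    (LinearMap.id - s.1.1 ∘ₗ h ∘ₗ s.1.2)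
    (by
      ext r
      have h0 : s.1.2 (s.1.1 (h (s.1.2 r))) = 0 := by
        have := pi_eq_zero s; exact congrFun (congrArg (fun f => f.toFun) this) _ |>.trans rfl
      simp [h0])
    (by
      ext r
      have h0 : s.1.2 (s.1.1 (h (s.1.2 r))) = 0 := by
        have := pi_eq_zero s; exact congrFun (congrArg (fun f => f.toFun) this) _ |>.trans rfl
      simp [h0])

lemma unitOf_mem_stab (h : M →ₗ[Λ] N) :
    unitOf s h ∈ MulAction.stabilizer (R ≃ₗ[Λ] R) s := by
  have hpi : ∀ n, s.1.2 (s.1.1 n) = 0 := fun n => by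
    have := pi_eq_zero s; exact congrFun (congrArg (fun f => f.toFun) this) _ |>.trans rfl
  show (unitOf s h) • s = s
  apply Subtype.ext
  refine Prod.ext (LinearMap.ext fun n => ?_) (LinearMap.ext fun r => ?_)
  · show (unitOf s h) (s.1.1 n) = s.1.1 n
    simp [unitOf, hpi]
  · show s.1.2 ((unitOf s h).symm r) = s.1.2 r
    have hsymm : (unitOf s h).symm r = r - s.1.1 (h (s.1.2 r)) := rfl
    rw [hsymm]
    simp [hpi]

/-- The stabilizer of a short exact sequence is `Hom(M,N)`. -/
noncomputable def homEquivStab :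
    (M →ₗ[Λ] N) ≃ MulAction.stabilizer (R ≃ₗ[Λ] R) s := by
  refine Equiv.ofBijective (fun h => ⟨unitOf s h, unitOf_mem_stab s h⟩) ⟨?_, ?_⟩
  · intro h h' hh
    have : (unitOf s h : R →ₗ[Λ] R) = unitOf s h' := by
      exact congrArg (fun e : R ≃ₗ[Λ] R => e.toLinearMap) (Subtype.ext_iff.1 hh)
    have h2 : s.1.1 ∘ₗ h ∘ₗ s.1.2 = s.1.1 ∘ₗ h' ∘ₗ s.1.2 := by
      have := this
      simpa [unitOf, add_right_inj] using this
    ext m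
    obtain ⟨r, rfl⟩ := s.2.2.1 m
    have := congrFun (congrArg (fun f : R →ₗ[Λ] R => (f : R → R)) h2) r
    exact s.2.1 (by simpa using this)
  · rintro ⟨φ, hφ⟩
    have hφ' : φ • s = s := hφ
    have hi : φ.toLinearMap ∘ₗ s.1.1 = s.1.1 := congrArg (fun t => t.1.1) hφ'
    have hp : s.1.2 ∘ₗ φ.symm.toLinearMap = s.1.2 := congrArg (fun t => t.1.2) hφ'
    have hpφ : s.1.2 ∘ₗ φ.toLinearMap = s.1.2 := by
      ext r
      have := LinearMap.congr_fun hp (φ r)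
      simpa using this.symm
    -- the "difference" b = φ - 1
    set b : R →ₗ[Λ] R := φ.toLinearMap - LinearMap.id with hb
    have hpb : s.1.2 ∘ₗ b = 0 := by
      rw [hb]; ext r
      have := LinearMap.congr_fun hpφ r
      simpa [sub_eq_zero] using this
    have hbi : ∀ n, b (s.1.1 n) = 0 := by
      intro n
      have := LinearMap.congr_fun hi n
      simp only [LinearMap.comp_apply, LinearEquiv.coe_coe] at this
      simp [hb, sub_eq_zero, this]
    have hrange : ∀ x, b x ∈ LinearMap.range s.1.1 := by
      intro x
      rw [s.2.2.2, LinearMap.mem_ker]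
      exact LinearMap.congr_fun hpb x
    -- corestrict b through i
    let e : N ≃ₗ[Λ] LinearMap.range s.1.1 := LinearEquiv.ofInjective s.1.1 s.2.1
    let c : R →ₗ[Λ] N := e.symm.toLinearMap ∘ₗ
      (LinearMap.codRestrict (LinearMap.range s.1.1) b hrange)
    have hic : ∀ x, s.1.1 (c x) = b x := by
      intro x
      show s.1.1 (e.symm ⟨b x, hrange x⟩) = b x
      exact LinearEquiv.ofInjective_symm_apply _ ⟨b x, hrange x⟩
    have hker : LinearMap.ker s.1.2 ≤ LinearMap.ker c := by
      intro x hx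
      rw [← s.2.2.2] at hx
      obtain ⟨n, rfl⟩ := hx
      have : s.1.1 (c (s.1.1 n)) = 0 := by rw [hic]; exact hbi n
      exact s.2.1 (by simpa using this)
    -- descend through p
    let q : (R ⧸ LinearMap.ker s.1.2) →ₗ[Λ] N := Submodule.liftQ _ c hker
    let w : M ≃ₗ[Λ] (R ⧸ LinearMap.ker s.1.2) :=
      (s.1.2.quotKerEquivOfSurjective s.2.2.1).symm
    refine ⟨q ∘ₗ w.toLinearMap, Subtype.ext ?_⟩
    apply LinearEquiv.toLinearMap_injective
    show (unitOf s (q ∘ₗ w.toLinearMap)).toLinearMap = φ.toLinearMap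
    have key : ∀ r, (q ∘ₗ w.toLinearMap) (s.1.2 r) = c r := by
      intro r
      have hw : w (s.1.2 r) = Submodule.Quotient.mk r := by
        apply (s.1.2.quotKerEquivOfSurjective s.2.2.1).injective
        simp [w]
      show q (w (s.1.2 r)) = c r
      rw [hw]
      rfl
    ext r
    show r + s.1.1 ((q ∘ₗ w.toLinearMap) (s.1.2 r)) = φ r
    rw [key, hic]
    simp [hb]

end stab

/-- Part A: `|SES| ⬝ |Hom(M,N)| = |Ext(M,N)_R| ⬝ |Aut R|` as a bijection. -/
noncomputable def sesProdHomEquiv :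
    SES Λ M N R × (M →ₗ[Λ] N) ≃
      Quotient (MulAction.orbitRel (R ≃ₗ[Λ] R) (SES Λ M N R)) × (R ≃ₗ[Λ] R) :=
  calc SES Λ M N R × (M →ₗ[Λ] N)
      ≃ (Σ ω : Quotient (MulAction.orbitRel (R ≃ₗ[Λ] R) (SES Λ M N R)),
          (R ≃ₗ[Λ] R) ⧸ MulAction.stabilizer (R ≃ₗ[Λ] R) ω.out) × (M →ₗ[Λ] N) :=
        Equiv.prodCongr
          (MulAction.selfEquivSigmaOrbitsQuotientStabilizer (R ≃ₗ[Λ] R) (SES Λ M N R))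
          (Equiv.refl _)
    _ ≃ Σ ω : Quotient (MulAction.orbitRel (R ≃ₗ[Λ] R) (SES Λ M N R)),
          ((R ≃ₗ[Λ] R) ⧸ MulAction.stabilizer (R ≃ₗ[Λ] R) ω.out) × (M →ₗ[Λ] N) :=
        Equiv.sigmaProdDistrib _ _
    _ ≃ Σ _ω : Quotient (MulAction.orbitRel (R ≃ₗ[Λ] R) (SES Λ M N R)), (R ≃ₗ[Λ] R) :=
        Equiv.sigmaCongrRight fun ω =>
          (Equiv.prodCongr (Equiv.refl _) (homEquivStab ω.out)).trans
            Subgroup.groupEquivQuotientProdSubgroup.symm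
    _ ≃ Quotient (MulAction.orbitRel (R ≃ₗ[Λ] R) (SES Λ M N R)) × (R ≃ₗ[Λ] R) :=
        Equiv.sigmaEquivProd _ _

section partB

lemma quotKer_mk (f : R →ₗ[Λ] M) (hf : Function.Surjective f) (x : R) :
    f.quotKerEquivOfSurjective hf (Submodule.Quotient.mk x) = f x := rfl

/-- The submodule `range i ⊆ R` attached to a short exact sequence. -/
noncomputable def rangeSub (s : SES Λ M N R) :
    {X : Submodule Λ R // Nonempty (X ≃ₗ[Λ] N) ∧ Nonempty ((R ⧸ X) ≃ₗ[Λ] M)} :=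
  ⟨LinearMap.range s.1.1,
    ⟨(LinearEquiv.ofInjective s.1.1 s.2.1).symm⟩,
    ⟨(Submodule.quotEquivOfEq _ _ s.2.2.2).trans
      (s.1.2.quotKerEquivOfSurjective s.2.2.1)⟩⟩

/-- The fiber of `rangeSub` over `X` is `Iso(N,X) × Iso(R/X,M)`. -/
noncomputable def fiberEquiv
    (X : {X : Submodule Λ R // Nonempty (X ≃ₗ[Λ] N) ∧ Nonempty ((R ⧸ X) ≃ₗ[Λ] M)}) :
    {s : SES Λ M N R // rangeSub s = X} ≃ (N ≃ₗ[Λ] X.1) × ((R ⧸ X.1) ≃ₗ[Λ] M) where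
  toFun sh :=
    ((LinearEquiv.ofInjective sh.1.1.1 sh.1.2.1).trans
        (LinearEquiv.ofEq _ _ (congrArg Subtype.val sh.2)),
      (Submodule.quotEquivOfEq X.1 (LinearMap.ker sh.1.1.2)
          ((congrArg Subtype.val sh.2) ▸ sh.1.2.2.2)).trans
        (sh.1.1.2.quotKerEquivOfSurjective sh.1.2.2.1))
  invFun ef :=
    ⟨⟨(X.1.subtype ∘ₗ ef.1.toLinearMap, ef.2.toLinearMap ∘ₗ X.1.mkQ),
      X.1.injective_subtype.comp ef.1.injective,
      ef.2.surjective.comp (Submodule.mkQ_surjective X.1), by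
        rw [LinearMap.range_comp, LinearMap.ker_comp, LinearEquiv.range, LinearEquiv.ker,
          Submodule.map_subtype_top, Submodule.comap_bot, Submodule.ker_mkQ]⟩,
      Subtype.ext (by
        show LinearMap.range (X.1.subtype ∘ₗ ef.1.toLinearMap) = X.1
        rw [LinearMap.range_comp, LinearEquiv.range, Submodule.map_subtype_top])⟩
  left_inv sh := by
    apply Subtype.ext
    apply Subtype.ext
    refine Prod.ext (LinearMap.ext fun n => rfl) (LinearMap.ext fun r => ?_)
    simp only [LinearMap.comp_apply, LinearEquiv.coe_coe, LinearEquiv.trans_apply,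
      Submodule.mkQ_apply, Submodule.quotEquivOfEq_mk, quotKer_mk]
  right_inv ef := by
    refine Prod.ext ?_ ?_
    · ext n
      rfl
    · apply LinearEquiv.toLinearMap_injective
      refine LinearMap.ext fun x => ?_
      obtain ⟨r, rfl⟩ := Submodule.mkQ_surjective X.1 x
      simp only [LinearMap.comp_apply, LinearEquiv.coe_coe, LinearEquiv.trans_apply,
        Submodule.mkQ_apply, Submodule.quotEquivOfEq_mk, quotKer_mk]

variable (Λ M N) in
/-- Composition with a fixed equivalence on the left. -/
def congrLeftEquiv {A B : Type} [AddCommGroup A] [Module Λ A] [AddCommGroup B] [Module Λ B]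
    (h : A ≃ₗ[Λ] B) : (A ≃ₗ[Λ] M) ≃ (B ≃ₗ[Λ] M) where
  toFun e := h.symm.trans e
  invFun e := h.trans e
  left_inv e := by ext x; simp
  right_inv e := by ext x; simp

variable (Λ M N) in
/-- Composition with a fixed equivalence on the right. -/
def congrRightEquiv {A B : Type} [AddCommGroup A] [Module Λ A] [AddCommGroup B] [Module Λ B]
    (h : A ≃ₗ[Λ] B) : (N ≃ₗ[Λ] A) ≃ (N ≃ₗ[Λ] B) where
  toFun e := e.trans h
  invFun e := e.trans h.symm
  left_inv e := by ext x; simp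
  right_inv e := by ext x; simp

/-- Part B: `|SES| = F^R_{M,N} ⬝ |Aut N| ⬝ |Aut M|` as a bijection. -/
noncomputable def sesEquivProd :
    SES Λ M N R ≃
      {X : Submodule Λ R // Nonempty (X ≃ₗ[Λ] N) ∧ Nonempty ((R ⧸ X) ≃ₗ[Λ] M)} ×
        ((N ≃ₗ[Λ] N) × (M ≃ₗ[Λ] M)) :=
  calc SES Λ M N R
      ≃ Σ X : {X : Submodule Λ R // Nonempty (X ≃ₗ[Λ] N) ∧ Nonempty ((R ⧸ X) ≃ₗ[Λ] M)},
          {s : SES Λ M N R // rangeSub s = X} := (Equiv.sigmaFiberEquiv rangeSub).symm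
    _ ≃ Σ X : {X : Submodule Λ R // Nonempty (X ≃ₗ[Λ] N) ∧ Nonempty ((R ⧸ X) ≃ₗ[Λ] M)},
          ((N ≃ₗ[Λ] N) × (M ≃ₗ[Λ] M)) :=
        Equiv.sigmaCongrRight fun X =>
          (fiberEquiv X).trans
            (Equiv.prodCongr (congrRightEquiv Λ N (Classical.choice X.2.1))
              (congrLeftEquiv Λ M (Classical.choice X.2.2)))
    _ ≃ _ := Equiv.sigmaEquivProd _ _

end partB

end RiedtmannAux

/-- Riedtmann's formula: for finite modules `M, N, R` over a finite ring,
the Hall number `F^R_{M,N}` (the number of submodules `X ⊆ R` with `X ≅ N`, `R/X ≅ M`)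
satisfies `F^R_{M,N} = (|Ext(M,N)_R|/|Hom(M,N)|)·(|Aut R|/(|Aut M|·|Aut N|))`, stated in
denominator-cleared form. -/
theorem riedtmann_formula [Fintype Λ] [Fintype M] [Fintype N] [Fintype R] :
    Nat.card {X : Submodule Λ R //
        Nonempty (X ≃ₗ[Λ] N) ∧ Nonempty ((R ⧸ X) ≃ₗ[Λ] M)}
      * Nat.card (M →ₗ[Λ] N) * Nat.card (M ≃ₗ[Λ] M) * Nat.card (N ≃ₗ[Λ] N)
    = Nat.card (Quot (ExtEquiv Λ M N R)) * Nat.card (R ≃ₗ[Λ] R) := by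
  classical
  have hA : Nat.card (SES Λ M N R) * Nat.card (M →ₗ[Λ] N)
      = Nat.card (Quot (ExtEquiv Λ M N R)) * Nat.card (R ≃ₗ[Λ] R) := by
    rw [← Nat.card_prod, Nat.card_congr (RiedtmannAux.sesProdHomEquiv), Nat.card_prod,
      ← Nat.card_congr (RiedtmannAux.quotEquivOrbitQuot (Λ := Λ) (M := M) (N := N) (R := R))]
  have hB : Nat.card (SES Λ M N R)
      = Nat.card {X : Submodule Λ R //
          Nonempty (X ≃ₗ[Λ] N) ∧ Nonempty ((R ⧸ X) ≃ₗ[Λ] M)}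
        * (Nat.card (N ≃ₗ[Λ] N) * Nat.card (M ≃ₗ[Λ] M)) := by
    rw [Nat.card_congr (RiedtmannAux.sesEquivProd), Nat.card_prod, Nat.card_prod]
  calc Nat.card {X : Submodule Λ R //
          Nonempty (X ≃ₗ[Λ] N) ∧ Nonempty ((R ⧸ X) ≃ₗ[Λ] M)}
        * Nat.card (M →ₗ[Λ] N) * Nat.card (M ≃ₗ[Λ] M) * Nat.card (N ≃ₗ[Λ] N)
      = Nat.card (SES Λ M N R) * Nat.card (M →ₗ[Λ] N) := by rw [hB]; ring
    _ = Nat.card (Quot (ExtEquiv Λ M N R)) * Nat.card (R ≃ₗ[Λ] R) := hA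


end Riedtmann
end
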